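/- In the wreath product G(r,n) = C_r ≀ S_n, for every element (h,σ), the elements (h,σ) and (h_{σ^{-1}}, σ^{-1}) are conjugate in G(r,n). -/

import Mathlib

open Equiv Function Finset

namespace WreathConjAux

variable {n : ℕ} (σ : Equiv.Perm (Fin n))

open scoped Classical in
/-- A canonical anchor in the `σ`-cycle of `i`. -/
noncomputable def anc (i : Fin n) : Fin n :=
  (Finset.univ.filter fun j => σ.SameCycle j i).min'
    ⟨i, Finset.mem_filter.2 ⟨Finset.mem_univ i, Equiv.Perm.SameCycle.refl σ i⟩⟩

lemma anc_sameCycle (i : Fin n) : σ.SameCycle (anc σ i) i := by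
  classical
  have := Finset.min'_mem (Finset.univ.filter fun j => σ.SameCycle j i)
    ⟨i, Finset.mem_filter.2 ⟨Finset.mem_univ i, Equiv.Perm.SameCycle.refl σ i⟩⟩
  exact (Finset.mem_filter.1 this).2

lemma anc_eq_of_sameCycle {i j : Fin n} (hij : σ.SameCycle i j) : anc σ i = anc σ j := by
  classical
  unfold anc
  congr 1
  ext k
  simp only [Finset.mem_filter, Finset.mem_univ, true_and]
  exact ⟨fun hk => hk.trans hij, fun hk => hk.trans hij.symm⟩

lemma anc_anc (i : Fin n) : anc σ (anc σ i) = anc σ i :=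
  anc_eq_of_sameCycle σ (anc_sameCycle σ i)

lemma anc_apply (i : Fin n) : anc σ (σ i) = anc σ i :=
  (anc_eq_of_sameCycle σ ((Equiv.Perm.sameCycle_apply_right).2 (Equiv.Perm.SameCycle.refl σ i))).symm

lemma anc_pow (i : Fin n) (j : ℕ) : anc σ ((σ ^ j) (anc σ i)) = anc σ i := by
  have h1 : σ.SameCycle (anc σ i) ((σ ^ j) (anc σ i)) := ⟨(j : ℤ), by rw [zpow_natCast]⟩
  rw [← anc_eq_of_sameCycle σ h1, anc_anc]

lemma exists_pow_anc (i : Fin n) : ∃ k : ℕ, (σ ^ k) (anc σ i) = i := by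
  obtain ⟨k, -, hk⟩ := (anc_sameCycle σ i).exists_pow_eq'
  exact ⟨k, hk⟩

/-- The canonical exponent: `σ ^ kk i` maps the anchor to `i`. -/
noncomputable def kk (i : Fin n) : ℕ := Nat.find (exists_pow_anc σ i)

lemma kk_spec (i : Fin n) : (σ ^ kk σ i) (anc σ i) = i := Nat.find_spec (exists_pow_anc σ i)

/-- The cycle length of the cycle through `i`. -/
noncomputable def mP (i : Fin n) : ℕ := Function.minimalPeriod σ (anc σ i)

lemma mem_periodicPts (x : Fin n) : x ∈ Function.periodicPts ⇑σ := by
  refine Function.mk_mem_periodicPts (orderOf_pos σ) ?_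
  show σ^[orderOf σ] x = x
  rw [Equiv.Perm.iterate_eq_pow, pow_orderOf_eq_one]
  rfl

lemma mP_pos (i : Fin n) : 0 < mP σ i :=
  Function.minimalPeriod_pos_of_mem_periodicPts (mem_periodicPts σ _)

lemma pow_mP (i : Fin n) : (σ ^ mP σ i) (anc σ i) = anc σ i := by
  have := Function.iterate_minimalPeriod (f := ⇑σ) (x := anc σ i)
  rwa [Equiv.Perm.iterate_eq_pow] at this

lemma pow_mod (i : Fin n) (j : ℕ) : (σ ^ (j % mP σ i)) (anc σ i) = (σ ^ j) (anc σ i) := by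
  have := Function.iterate_mod_minimalPeriod_eq (f := ⇑σ) (x := anc σ i) (n := j)
  rwa [Equiv.Perm.iterate_eq_pow, Equiv.Perm.iterate_eq_pow] at this

lemma kk_lt (i : Fin n) : kk σ i < mP σ i := by
  have h1 : (σ ^ (kk σ i % mP σ i)) (anc σ i) = i := by rw [pow_mod, kk_spec]
  have h2 : kk σ i ≤ kk σ i % mP σ i := Nat.find_le h1
  exact lt_of_le_of_lt h2 (Nat.mod_lt _ (mP_pos σ i))

lemma kk_unique (i : Fin n) {j : ℕ} (hj : j < mP σ i) (hji : (σ ^ j) (anc σ i) = i) :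
    j = kk σ i := by
  have h1 : (σ ^ j) (anc σ i) = (σ ^ kk σ i) (anc σ i) := by rw [hji, kk_spec]
  exact Function.iterate_injOn_Iio_minimalPeriod (f := ⇑σ) (x := anc σ i)
    (Set.mem_Iio.2 hj) (Set.mem_Iio.2 (kk_lt σ i)) h1

lemma kk_pow (i : Fin n) {j : ℕ} (hj : j < mP σ i) : kk σ ((σ ^ j) (anc σ i)) = j := by
  have ha : anc σ ((σ ^ j) (anc σ i)) = anc σ i := anc_pow σ i j
  refine (kk_unique σ ((σ ^ j) (anc σ i)) ?_ ?_).symm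
  · show j < Function.minimalPeriod (⇑σ) (anc σ ((σ ^ j) (anc σ i)))
    rw [ha]; exact hj
  · rw [ha]

lemma mP_pow (i : Fin n) (j : ℕ) : mP σ ((σ ^ j) (anc σ i)) = mP σ i := by
  unfold mP; rw [anc_pow]

/-- The cycle-reversing involution. -/
noncomputable def tt (i : Fin n) : Fin n := (σ ^ (mP σ i - kk σ i)) (anc σ i)

lemma anc_tt (i : Fin n) : anc σ (tt σ i) = anc σ i := anc_pow σ i _

lemma mP_tt (i : Fin n) : mP σ (tt σ i) = mP σ i := mP_pow σ i _

lemma tt_of_kk_zero (i : Fin n) (h0 : kk σ i = 0) : tt σ i = i := by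
  have hi : anc σ i = i := by have := kk_spec σ i; rwa [h0, pow_zero] at this
  unfold tt
  rw [h0, Nat.sub_zero, pow_mP, hi]

lemma kk_tt (i : Fin n) (h0 : kk σ i ≠ 0) : kk σ (tt σ i) = mP σ i - kk σ i := by
  exact kk_pow σ i (Nat.sub_lt (mP_pos σ i) (Nat.pos_of_ne_zero h0))

lemma tt_tt (i : Fin n) : tt σ (tt σ i) = i := by
  by_cases h0 : kk σ i = 0
  · rw [tt_of_kk_zero σ i h0, tt_of_kk_zero σ i h0]
  · have h1 : kk σ (tt σ i) = mP σ i - kk σ i := kk_tt σ i h0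
    show (σ ^ (mP σ (tt σ i) - kk σ (tt σ i))) (anc σ (tt σ i)) = i
    rw [h1, mP_tt, anc_tt, Nat.sub_sub_self (le_of_lt (kk_lt σ i)), kk_spec]

lemma sigma_eq_pow_succ (i : Fin n) : σ i = (σ ^ (kk σ i + 1)) (anc σ i) := by
  rw [pow_succ', Equiv.Perm.mul_apply, kk_spec]

lemma tt_sigma (i : Fin n) : tt σ (σ i) = σ⁻¹ (tt σ i) := by
  have hanc : anc σ (σ i) = anc σ i := anc_apply σ i
  have hmP : mP σ (σ i) = mP σ i := by unfold mP; rw [hanc]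
  by_cases hc : kk σ i + 1 < mP σ i
  · have hk : kk σ (σ i) = kk σ i + 1 := by
      have := kk_pow σ i hc
      rwa [← sigma_eq_pow_succ] at this
    unfold tt
    rw [hk, hmP, hanc]
    have h2 : mP σ i - kk σ i = (mP σ i - (kk σ i + 1)) + 1 := by
      have := kk_lt σ i; omega
    rw [h2, pow_succ', Equiv.Perm.mul_apply, Equiv.Perm.inv_def, Equiv.symm_apply_apply]
  · have hm : kk σ i + 1 = mP σ i := by have := kk_lt σ i; omega
    have hsi : σ i = anc σ i := by
      rw [sigma_eq_pow_succ σ i, hm, pow_mP]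
    have hk : kk σ (σ i) = 0 := by
      have := kk_pow σ (σ i) (show 0 < mP σ (σ i) from mP_pos σ _)
      rwa [pow_zero, Equiv.Perm.one_apply, hanc, ← hsi] at this
    unfold tt
    rw [hk, hmP, hanc, Nat.sub_zero, pow_mP]
    have h2 : mP σ i - kk σ i = 1 := by omega
    rw [h2, pow_one, Equiv.Perm.inv_def, Equiv.symm_apply_apply]

variable {A : Type*} [CommGroup A] (h : Fin n → A)

/-- The local defect. -/
noncomputable def gg (i : Fin n) : A := h (σ i) * (h (tt σ i))⁻¹

/-- The cocycle solving function. -/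
noncomputable def ff (i : Fin n) : A :=
  (∏ j ∈ Finset.range (kk σ i), gg σ h ((σ ^ j) (anc σ i)))⁻¹

lemma prod_cycle (i : Fin n) :
    ∏ j ∈ Finset.range (mP σ i), gg σ h ((σ ^ j) (anc σ i)) = 1 := by
  set a := anc σ i with ha
  set m := mP σ i with hm
  have key : ∀ j ∈ Finset.range m,
      gg σ h ((σ ^ j) a) = h ((σ ^ (j + 1)) a) * (h ((σ ^ (m - j)) a))⁻¹ := by
    intro j hj
    rw [Finset.mem_range] at hj
    unfold gg
    congr 2
    · rw [pow_succ', Equiv.Perm.mul_apply]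
    · unfold tt
      rw [kk_pow σ i hj, mP_pow, anc_pow, ← ha, ← hm]
  rw [Finset.prod_congr rfl key, Finset.prod_mul_distrib, Finset.prod_inv_distrib]
  have e1 : ∏ j ∈ Finset.range m, h ((σ ^ (m - j)) a) =
      ∏ j ∈ Finset.range m, h ((σ ^ (j + 1)) a) := by
    rw [← Finset.prod_range_reflect (fun j => h ((σ ^ (j + 1)) a)) m]
    refine Finset.prod_congr rfl fun j hj => ?_
    rw [Finset.mem_range] at hj
    have hidx : m - 1 - j + 1 = m - j := by omega
    rw [hidx]
  rw [e1, mul_inv_cancel]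

lemma ff_sigma (i : Fin n) : ff σ h (σ i) = ff σ h i * (gg σ h i)⁻¹ := by
  have hanc : anc σ (σ i) = anc σ i := anc_apply σ i
  have hgi : gg σ h ((σ ^ kk σ i) (anc σ i)) = gg σ h i := by rw [kk_spec]
  by_cases hc : kk σ i + 1 < mP σ i
  · have hk : kk σ (σ i) = kk σ i + 1 := by
      have := kk_pow σ i hc
      rwa [← sigma_eq_pow_succ] at this
    unfold ff
    rw [hk, hanc, Finset.prod_range_succ, mul_inv, hgi]
  · have hm : kk σ i + 1 = mP σ i := by have := kk_lt σ i; omega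
    have hsi : σ i = anc σ i := by rw [sigma_eq_pow_succ σ i, hm, pow_mP]
    have hk : kk σ (σ i) = 0 := by
      have := kk_pow σ (σ i) (show 0 < mP σ (σ i) from mP_pos σ _)
      rwa [pow_zero, Equiv.Perm.one_apply, hanc, ← hsi] at this
    unfold ff
    rw [hk, Finset.prod_range_zero, inv_one]
    have hp := prod_cycle σ h i
    rw [← hm, Finset.prod_range_succ, hgi] at hp
    rw [← mul_inv_rev, eq_comm, inv_eq_one, mul_comm]
    exact hp

end WreathConjAux


/-- The action of a permutation on tuples, as a monoid homomorphism into the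
multiplicative automorphisms of the product group `Fin n → A`. -/
def permAut (A : Type*) [Group A] (n : ℕ) :
    Equiv.Perm (Fin n) →* MulAut (Fin n → A) where
  toFun σ :=
    { toFun := fun f i => f (σ⁻¹ i)
      invFun := fun f i => f (σ i)
      left_inv := fun f => funext fun i => by simp
      right_inv := fun f => funext fun i => by simp
      map_mul' := fun f g => rfl }
  map_one' := by
    refine MulEquiv.ext fun f => funext fun i => ?_
    simp
  map_mul' := fun σ τ => by
    refine MulEquiv.ext fun f => funext fun i => ?_
    simp [mul_inv_rev]

/-- The wreath product `A ≀ Sₙ`, realized as a semidirect product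
`(Fin n → A) ⋊ Perm (Fin n)`, with multiplication `(f,τ)(h,σ) = (f · h_τ, τσ)`
where `h_τ i = h (τ⁻¹ i)`. -/
abbrev GW (A : Type*) [Group A] (n : ℕ) :=
  SemidirectProduct (Fin n → A) (Equiv.Perm (Fin n)) (permAut A n)

/-- The map `ī_n : (h, σ) ↦ (h_{σ⁻¹}, σ⁻¹)`; note `h_{σ⁻¹} i = h (σ i)`. -/
def ibar {A : Type*} [Group A] {n : ℕ} (x : GW A n) : GW A n :=
  ⟨fun i => x.left (x.right i), x.right⁻¹⟩

/-- The cyclic group of order `r` (multiplicative). -/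
abbrev Cr (r : ℕ) := Multiplicative (ZMod r)

/-- In the wreath product `G(r,n) = C_r ≀ S_n`, every element `(h,σ)` is
conjugate to `(h_{σ⁻¹}, σ⁻¹)`. -/
theorem wreath_conj_ibar (r n : ℕ) (x : GW (Cr r) n) : IsConj x (ibar x) := by
  obtain ⟨h, σ⟩ := x
  rw [isConj_iff]
  refine ⟨⟨WreathConjAux.ff σ h,
      Function.Involutive.toPerm (WreathConjAux.tt σ) (WreathConjAux.tt_tt σ)⟩, ?_⟩
  rw [mul_inv_eq_iff_eq_mul]
  refine SemidirectProduct.ext ?_ ?_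
  · funext i
    show WreathConjAux.ff σ h i *
        h ((Function.Involutive.toPerm (WreathConjAux.tt σ) (WreathConjAux.tt_tt σ))⁻¹ i) =
      h (σ i) * WreathConjAux.ff σ h ((σ⁻¹)⁻¹ i)
    have ht : (Function.Involutive.toPerm (WreathConjAux.tt σ) (WreathConjAux.tt_tt σ))⁻¹ i =
        WreathConjAux.tt σ i := by
      rw [show (Function.Involutive.toPerm (WreathConjAux.tt σ) (WreathConjAux.tt_tt σ))⁻¹ =
        Function.Involutive.toPerm (WreathConjAux.tt σ) (WreathConjAux.tt_tt σ) from
        Function.Involutive.toPerm_symm _]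
      rfl
    rw [ht, inv_inv, WreathConjAux.ff_sigma σ h i]
    unfold WreathConjAux.gg
    simp [mul_inv_rev, mul_comm, mul_left_comm, mul_assoc]
  · show (Function.Involutive.toPerm (WreathConjAux.tt σ) (WreathConjAux.tt_tt σ)) * σ =
      σ⁻¹ * (Function.Involutive.toPerm (WreathConjAux.tt σ) (WreathConjAux.tt_tt σ))
    exact Equiv.ext fun i => WreathConjAux.tt_sigma σ i
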